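/- Let P be a rendez-vous protocol and N_P its associated Petri net. Then for every n ∈ ℕ, the configuration C_f^(n) is reachable from C_i^(n) in P (i.e., C_i^(n) →* C_f^(n)) if and only if the marking M_f^(n) belongs to Reach(M_0) in N_P. -/

import Mathlib

/-- Actions labelling edges of a rendez-vous protocol: request (`recv`, written `?a`)
or answer (`send`, written `!a`). -/
inductive RVAct (A : Type) : Type
  | send : A → RVAct A
  | recv : A → RVAct A

/-- A rendez-vous protocol: a finite set of states `Q` partitioned (via `isLeader`)
into process states and leader states, a finite alphabet `A`, initial/final states for
processes and for the leader, and a set of edges staying within each part. -/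
structure RVProtocol (Q A : Type) : Type where
  isLeader : Q → Bool
  qi : Q
  qf : Q
  qiL : Q
  qfL : Q
  hqi : isLeader qi = false
  hqf : isLeader qf = false
  hqiL : isLeader qiL = true
  hqfL : isLeader qfL = true
  E : Set (Q × RVAct A × Q)
  hE : ∀ e ∈ E, isLeader e.1 = isLeader e.2.2

namespace RVProtocol

variable {Q A : Type} [DecidableEq Q] (P : RVProtocol Q A)

/-- A configuration is a multiset of states with exactly one occurrence of a leader state. -/
def IsConfig (C : Multiset Q) : Prop :=
  (C.filter (fun q => P.isLeader q = true)).card = 1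

/-- One rendez-vous step between configurations. -/
def Step (C C' : Multiset Q) : Prop :=
  ∃ (a : A) (q1 q2 q1' q2' : Q),
    (q1, RVAct.recv a, q2) ∈ P.E ∧ (q1', RVAct.send a, q2') ∈ P.E ∧
    0 < C.count q1 ∧ 0 < C.count q1' ∧ 2 ≤ C.count q1 + C.count q1' ∧
    C' = C - {q1, q1'} + {q2, q2'}

/-- Reachability: reflexive-transitive closure of `Step`. -/
def Reach : Multiset Q → Multiset Q → Prop := Relation.ReflTransGen P.Step

/-- The initial configuration with `n` processes. -/
def Ci (n : ℕ) : Multiset Q := Multiset.replicate n P.qi + {P.qiL}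

/-- The final configuration with `n` processes. -/
def Cf (n : ℕ) : Multiset Q := Multiset.replicate n P.qf + {P.qfL}

/-! The Petri net `N_P` associated to a protocol `P`: one place per state of `Q`
(markings are functions `Q → ℕ`), a transition `t_i` producing a token in `p_{q_i}`,
a transition `t_f^L` consuming a token from `p_{q_f^L}`, and for every pair of edges
`(q1,!a,q1')`, `(q2,?a,q2')` a transition with precondition `p_{q1} + p_{q2}` and
postcondition `p_{q1'} + p_{q2'}`.  We describe it by its firing relation. -/
def NPStep (M M' : Q → ℕ) : Prop :=
  -- transition `t_i`
  (M' = M + Pi.single P.qi 1) ∨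
  -- transition `t_f^L`
  (Pi.single P.qfL 1 ≤ M ∧ M' = M - Pi.single P.qfL 1) ∨
  -- rendez-vous transitions
  (∃ (a : A) (q1 q2 q1' q2' : Q),
    (q1, RVAct.send a, q1') ∈ P.E ∧ (q2, RVAct.recv a, q2') ∈ P.E ∧
    Pi.single q1 1 + Pi.single q2 1 ≤ M ∧
    M' = M - (Pi.single q1 1 + Pi.single q2 1) + (Pi.single q1' 1 + Pi.single q2' 1))

/-- Reachability in the Petri net `N_P`. -/
def NPReach : (Q → ℕ) → (Q → ℕ) → Prop := Relation.ReflTransGen P.NPStep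

/-- The initial marking `M_0` of `N_P`: one token in `p_{q_i^L}`, none elsewhere. -/
def M0 : Q → ℕ := Pi.single P.qiL 1

/-- The marking `M_f^{(n)}`: `n` tokens in `p_{q_f}`, none elsewhere. -/
def Mf (n : ℕ) : Q → ℕ := Pi.single P.qf n

end RVProtocol

section Aux

variable {Q A : Type} [Fintype Q] [DecidableEq Q] (P : RVProtocol Q A)

/-- The multiset associated to a marking. -/
private def fm (M : Q → ℕ) : Multiset Q := ∑ q : Q, Multiset.replicate (M q) q

private lemma count_fm (M : Q → ℕ) (x : Q) : (fm M).count x = M x := by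
  simp [fm, Multiset.count_sum', Multiset.count_replicate]

private lemma count_replicate' (a b : Q) (k : ℕ) :
    (Multiset.replicate k b).count a = if a = b then k else 0 := by
  rcases eq_or_ne a b with h | h
  · subst h; simp
  · simp [Multiset.count_replicate, h, Ne.symm h]

/-- The marking associated to a multiset. -/
private def tm (C : Multiset Q) : Q → ℕ := fun q => C.count q

/-- Total number of tokens. -/
private def tot (M : Q → ℕ) : ℕ := ∑ q, M q

/-- Number of tokens on leader places. -/
private def lc (M : Q → ℕ) : ℕ :=
  ∑ q ∈ Finset.univ.filter (fun q => P.isLeader q = true), M q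

private lemma tot_add (M N : Q → ℕ) : tot (M + N) = tot M + tot N :=
  Finset.sum_add_distrib

private lemma lc_add (M N : Q → ℕ) : lc P (M + N) = lc P M + lc P N :=
  Finset.sum_add_distrib

private lemma tot_sub {M N : Q → ℕ} (h : N ≤ M) : tot (M - N) = tot M - tot N :=
  Finset.sum_tsub_distrib _ fun x _ => h x

private lemma lc_sub {M N : Q → ℕ} (h : N ≤ M) : lc P (M - N) = lc P M - lc P N :=
  Finset.sum_tsub_distrib _ fun x _ => h x

private lemma tot_le {M N : Q → ℕ} (h : N ≤ M) : tot N ≤ tot M :=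
  Finset.sum_le_sum fun i _ => h i

private lemma lc_le {M N : Q → ℕ} (h : N ≤ M) : lc P N ≤ lc P M :=
  Finset.sum_le_sum fun i _ => h i

private lemma tot_single (x : Q) (k : ℕ) : tot (Pi.single x k : Q → ℕ) = k := by
  simp [tot, Finset.sum_pi_single']

private lemma lc_single (x : Q) (k : ℕ) :
    lc P (Pi.single x k : Q → ℕ) = if P.isLeader x = true then k else 0 := by
  simp [lc, Finset.sum_pi_single', Finset.mem_filter]

private lemma le_tot (M : Q → ℕ) (x : Q) : M x ≤ tot M :=
  Finset.single_le_sum (fun i _ => Nat.zero_le _) (Finset.mem_univ x)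

private lemma le_lc {M : Q → ℕ} {x : Q} (hx : P.isLeader x = true) : M x ≤ lc P M :=
  Finset.single_le_sum (fun i _ => Nat.zero_le _)
    (Finset.mem_filter.2 ⟨Finset.mem_univ _, hx⟩)

/-- Total count is preserved by a rendez-vous transition. -/
private lemma tot_rv {M : Q → ℕ} {u1 u2 v1 v2 : Q}
    (hle : Pi.single u1 1 + Pi.single u2 1 ≤ M) :
    tot (M - (Pi.single u1 1 + Pi.single u2 1) + (Pi.single v1 1 + Pi.single v2 1))
      = tot M := by
  have h := tot_le hle
  simp only [tot_add, tot_single] at h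
  simp only [tot_sub hle, tot_add, tot_single]
  omega

/-- Leader count is preserved by a rendez-vous transition. -/
private lemma lc_rv {M : Q → ℕ} {u1 u2 v1 v2 : Q}
    (hle : Pi.single u1 1 + Pi.single u2 1 ≤ M)
    (e1 : P.isLeader u1 = P.isLeader v1) (e2 : P.isLeader u2 = P.isLeader v2) :
    lc P (M - (Pi.single u1 1 + Pi.single u2 1) + (Pi.single v1 1 + Pi.single v2 1))
      = lc P M := by
  have h := lc_le P hle
  simp only [lc_add, lc_single] at h
  simp only [lc_sub P hle, lc_add, lc_single]
  simp only [← e1, ← e2]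
  omega

private lemma step_inv {M M' : Q → ℕ} (h : P.NPStep M M') :
    tot M + lc P M' ≤ tot M' + lc P M := by
  rcases h with hc | ⟨hle, hc⟩ | ⟨a, u1, u2, v1, v2, hsE, hrE, hle, hc⟩
  · subst hc
    rw [tot_add, lc_add, tot_single, lc_single, P.hqi]
    simp
  · subst hc
    have h1 : (1 : ℕ) ≤ M P.qfL := by simpa using hle P.qfL
    have h2 : M P.qfL ≤ lc P M := le_lc P P.hqfL
    have h3 : M P.qfL ≤ tot M := le_tot M P.qfL
    rw [tot_sub hle, lc_sub P hle, tot_single, lc_single, P.hqfL]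
    simp
    omega
  · subst hc
    have e1 := P.hE _ hsE
    have e2 := P.hE _ hrE
    rw [tot_rv hle, lc_rv P hle e1 e2]

private lemma reach_inv {M N : Q → ℕ} (h : P.NPReach M N) :
    tot M + lc P N ≤ tot N + lc P M := by
  induction h with
  | refl => omega
  | tail h1 h2 ih => have := step_inv P h2; omega

private lemma mk_step {a : A} {q1 q2 q1' q2' : Q}
    (hrecv : (q1, RVAct.recv a, q2) ∈ P.E) (hsend : (q1', RVAct.send a, q2') ∈ P.E)
    {C : Multiset Q} (h1 : 0 < C.count q1) (h2 : 0 < C.count q1')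
    (h3 : 2 ≤ C.count q1 + C.count q1') :
    P.Step C (C - {q1, q1'} + {q2, q2'}) :=
  ⟨a, q1, q2, q1', q2', hrecv, hsend, h1, h2, h3, rfl⟩

/-- Backward simulation, phase after the leader has stopped. -/
private lemma reach0 (n : ℕ) :
    ∀ M : Q → ℕ, P.NPReach M (P.Mf n) → lc P M = 0 →
      P.Reach (fm M + Multiset.replicate (n - tot M) P.qi + {P.qfL}) (P.Cf n) := by
  intro M h
  induction h using Relation.ReflTransGen.head_induction_on with
  | refl =>
    intro _
    have heq : fm (P.Mf n) + Multiset.replicate (n - tot (P.Mf n)) P.qi + {P.qfL}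
        = P.Cf n := by
      refine Multiset.ext.2 fun x => ?_
      simp [RVProtocol.Cf, RVProtocol.Mf, count_fm, tot_single,
        count_replicate', Multiset.count_singleton, Pi.single_apply]
    rw [heq]
    exact Relation.ReflTransGen.refl
  | @head M c hs hr ih =>
    intro hlc
    rcases hs with hc | ⟨hle, hc⟩ | ⟨a, u1, u2, v1, v2, hsE, hrE, hle, hc⟩
    · -- transition t_i
      have hlc' : lc P c = 0 := by
        rw [hc, lc_add P, lc_single, P.hqi]; simpa using hlc
      have htot : tot c = tot M + 1 := by rw [hc, tot_add, tot_single]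
      have hbound : tot c ≤ n := by
        have h1 := reach_inv P hr
        have h2 : lc P (P.Mf n) = 0 := by rw [RVProtocol.Mf, lc_single, P.hqf]; simp
        have h3 : tot (P.Mf n) = n := tot_single _ _
        omega
      have key := ih hlc'
      have heq : fm M + Multiset.replicate (n - tot M) P.qi + {P.qfL}
          = fm c + Multiset.replicate (n - tot c) P.qi + {P.qfL} := by
        rw [htot]
        refine Multiset.ext.2 fun x => ?_
        simp only [hc, Multiset.count_add, count_fm, count_replicate',
          Multiset.count_singleton, Pi.add_apply, Pi.single_apply]
        split_ifs <;> omega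
      rw [heq]; exact key
    · -- transition t_f^L : impossible, no leader token
      exfalso
      have h1 : (1 : ℕ) ≤ M P.qfL := by simpa using hle P.qfL
      have h2 : M P.qfL ≤ lc P M := le_lc P P.hqfL
      omega
    · -- rendez-vous transition
      have e1 := P.hE _ hsE
      have e2 := P.hE _ hrE
      have hlc' : lc P c = 0 := by rw [hc, lc_rv P hle e1 e2]; exact hlc
      have htot : tot c = tot M := by rw [hc, tot_rv hle]
      have key := ih hlc'
      rw [htot] at key
      have h1 := hle u1
      have h2 := hle u2
      simp only [Pi.add_apply, Pi.single_apply, if_pos rfl] at h1 h2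
      have hm1 : 1 ≤ M u1 := by split_ifs at h1 <;> omega
      have hm2 : 1 ≤ M u2 := by split_ifs at h2 <;> omega
      set C := fm M + Multiset.replicate (n - tot M) P.qi + {P.qfL} with hC
      have hcu : ∀ y, M y ≤ C.count y := by
        intro y
        simp only [hC, Multiset.count_add, count_fm, count_replicate',
          Multiset.count_singleton]
        split_ifs <;> omega
      have hp1 : 0 < C.count u2 := lt_of_lt_of_le hm2 (hcu u2)
      have hp2 : 0 < C.count u1 := lt_of_lt_of_le hm1 (hcu u1)
      have hp3 : 2 ≤ C.count u2 + C.count u1 := by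
        have := hcu u1; have := hcu u2; omega
      have hstep := mk_step P hrE hsE hp1 hp2 hp3
      have heq : C - {u2, u1} + {v2, v1}
          = fm c + Multiset.replicate (n - tot M) P.qi + {P.qfL} := by
        refine Multiset.ext.2 fun x => ?_
        have hx1 := hle x
        simp only [Pi.add_apply, Pi.single_apply] at hx1
        simp only [hC, hc, Multiset.count_add, Multiset.count_sub, count_fm,
          count_replicate', Multiset.count_singleton, Multiset.count_zero, Multiset.insert_eq_cons,
          Multiset.count_cons, Multiset.count_singleton, Multiset.count_zero, Pi.add_apply, Pi.sub_apply, Pi.single_apply]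
        split_ifs at hx1 ⊢ <;> omega
      exact Relation.ReflTransGen.head hstep (heq ▸ key)

/-- Backward simulation, phase while the leader is alive. -/
private lemma reach1 (n : ℕ) :
    ∀ M : Q → ℕ, P.NPReach M (P.Mf n) → lc P M = 1 →
      P.Reach (fm M + Multiset.replicate (n + 1 - tot M) P.qi) (P.Cf n) := by
  intro M h
  induction h using Relation.ReflTransGen.head_induction_on with
  | refl =>
    intro hlc
    exfalso
    rw [RVProtocol.Mf, lc_single, P.hqf] at hlc
    simp at hlc
  | @head M c hs hr ih =>
    intro hlc
    rcases hs with hc | ⟨hle, hc⟩ | ⟨a, u1, u2, v1, v2, hsE, hrE, hle, hc⟩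
    · -- transition t_i
      have hlc' : lc P c = 1 := by
        rw [hc, lc_add P, lc_single, P.hqi]; simpa using hlc
      have htot : tot c = tot M + 1 := by rw [hc, tot_add, tot_single]
      have hbound : tot c ≤ n + 1 := by
        have h1 := reach_inv P hr
        have h2 : lc P (P.Mf n) = 0 := by rw [RVProtocol.Mf, lc_single, P.hqf]; simp
        have h3 : tot (P.Mf n) = n := tot_single _ _
        omega
      have key := ih hlc'
      have heq : fm M + Multiset.replicate (n + 1 - tot M) P.qi
          = fm c + Multiset.replicate (n + 1 - tot c) P.qi := by
        rw [htot]
        refine Multiset.ext.2 fun x => ?_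
        simp only [hc, Multiset.count_add, count_fm, count_replicate',
          Pi.add_apply, Pi.single_apply]
        split_ifs <;> omega
      rw [heq]; exact key
    · -- transition t_f^L : go to phase 0
      have h1 : (1 : ℕ) ≤ M P.qfL := by simpa using hle P.qfL
      have htM : 1 ≤ tot M := le_trans h1 (le_tot M P.qfL)
      have hlcsub : lc P c = 0 := by
        rw [hc, lc_sub P hle, lc_single, P.hqfL]
        simp
        omega
      have htot : tot c = tot M - 1 := by rw [hc, tot_sub hle, tot_single]
      have key := reach0 P n c hr hlcsub
      rw [htot] at key
      have heq : fm M + Multiset.replicate (n + 1 - tot M) P.qi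
          = fm c + Multiset.replicate (n - (tot M - 1)) P.qi + {P.qfL} := by
        refine Multiset.ext.2 fun x => ?_
        have hx1 := hle x
        simp only [Pi.single_apply] at hx1
        simp only [hc, Multiset.count_add, count_fm, count_replicate',
          Multiset.count_singleton, Pi.sub_apply, Pi.single_apply]
        split_ifs at hx1 ⊢ <;> omega
      rw [heq]; exact key
    · -- rendez-vous transition
      have e1 := P.hE _ hsE
      have e2 := P.hE _ hrE
      have hlc' : lc P c = 1 := by rw [hc, lc_rv P hle e1 e2]; exact hlc
      have htot : tot c = tot M := by rw [hc, tot_rv hle]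
      have key := ih hlc'
      rw [htot] at key
      have h1 := hle u1
      have h2 := hle u2
      simp only [Pi.add_apply, Pi.single_apply, if_pos rfl] at h1 h2
      have hm1 : 1 ≤ M u1 := by split_ifs at h1 <;> omega
      have hm2 : 1 ≤ M u2 := by split_ifs at h2 <;> omega
      set C := fm M + Multiset.replicate (n + 1 - tot M) P.qi with hC
      have hcu : ∀ y, M y ≤ C.count y := by
        intro y
        simp only [hC, Multiset.count_add, count_fm, Multiset.count_replicate]
        split_ifs <;> omega
      have hp1 : 0 < C.count u2 := lt_of_lt_of_le hm2 (hcu u2)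
      have hp2 : 0 < C.count u1 := lt_of_lt_of_le hm1 (hcu u1)
      have hp3 : 2 ≤ C.count u2 + C.count u1 := by
        have := hcu u1; have := hcu u2; omega
      have hstep := mk_step P hrE hsE hp1 hp2 hp3
      have heq : C - {u2, u1} + {v2, v1}
          = fm c + Multiset.replicate (n + 1 - tot M) P.qi := by
        refine Multiset.ext.2 fun x => ?_
        have hx1 := hle x
        simp only [Pi.add_apply, Pi.single_apply] at hx1
        simp only [hC, hc, Multiset.count_add, Multiset.count_sub, count_fm,
          count_replicate', Multiset.insert_eq_cons,
          Multiset.count_cons, Multiset.count_singleton, Multiset.count_zero, Pi.add_apply, Pi.sub_apply, Pi.single_apply]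
        split_ifs at hx1 ⊢ <;> omega
      exact Relation.ReflTransGen.head hstep (heq ▸ key)

/-- Protocol steps never decrease the size of the configuration. -/
private lemma step_card {C C' : Multiset Q} (h : P.Step C C') : C.card ≤ C'.card := by
  rcases h with ⟨a, q1, q2, q1', q2', _, _, _, _, _, hC'⟩
  subst hC'
  have hle : C ≤ C - {q1, q1'} + {q1, q1'} := le_tsub_add
  have := Multiset.card_le_card hle
  simp only [Multiset.card_add, Multiset.insert_eq_cons, Multiset.card_cons,
    Multiset.card_singleton] at this ⊢
  omega

private lemma reach_card {C D : Multiset Q} (h : P.Reach C D) : C.card ≤ D.card := by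
  induction h with
  | refl => exact le_refl _
  | tail h1 h2 ih => exact le_trans ih (step_card P h2)

/-- Forward simulation of an exact (size-preserving) protocol step. -/
private lemma fwd_step {C C' : Multiset Q} (h : P.Step C C') (hcard : C'.card = C.card) :
    P.NPStep (tm C) (tm C') := by
  rcases h with ⟨a, q1, q2, q1', q2', hr, hs, h1, h2, h3, hC'⟩
  have hT : ({q1, q1'} : Multiset Q) ≤ C := by
    by_contra hT
    rw [Multiset.le_iff_count] at hT
    push_neg at hT
    obtain ⟨x, hx⟩ := hT
    simp only [Multiset.insert_eq_cons, Multiset.count_cons, Multiset.count_singleton, Multiset.count_zero, Multiset.count_singleton] at hx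
    rcases eq_or_ne x q1 with hq | hq
    swap
    · rcases eq_or_ne x q1' with hq' | hq'
      · subst hq'
        rw [if_pos rfl, if_neg hq] at hx
        omega
      · rw [if_neg hq', if_neg hq] at hx
        omega
    subst hq
    rcases eq_or_ne x q1' with hq' | hq'
    swap
    · rw [if_neg hq', if_pos rfl] at hx
      omega
    subst hq'
    rw [if_pos rfl] at hx
    have hc1 : C.count x = 1 := by omega
    have hsub : C - ({x, x} : Multiset Q) = C - {x} := by
      refine Multiset.ext.2 fun y => ?_
      simp only [Multiset.count_sub, Multiset.insert_eq_cons, Multiset.count_cons,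
        Multiset.count_singleton, Multiset.count_zero]
      rcases eq_or_ne y x with hy | hy
      · rw [if_pos hy]
        subst hy
        omega
      · rw [if_neg hy]
    have hone : ({x} : Multiset Q) ≤ C := Multiset.singleton_le.2 (Multiset.count_pos.1 h1)
    have h1card : 1 ≤ C.card := by
      have := Multiset.card_le_card hone; simpa using this
    have hcard' : C'.card = C.card + 1 := by
      rw [hC', hsub, Multiset.card_add, Multiset.card_sub hone]
      simp
      omega
    omega
  refine Or.inr (Or.inr ⟨a, q1', q1, q2', q2, hs, hr, ?_, ?_⟩)
  · rw [Pi.le_def]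
    intro x
    have hx := Multiset.le_iff_count.1 hT x
    simp only [Multiset.insert_eq_cons, Multiset.count_cons, Multiset.count_singleton, Multiset.count_zero, Multiset.count_singleton] at hx
    simp only [tm, Pi.add_apply, Pi.single_apply]
    split_ifs at hx ⊢ <;> omega
  · funext x
    have hx := Multiset.le_iff_count.1 hT x
    simp only [Multiset.insert_eq_cons, Multiset.count_cons, Multiset.count_singleton, Multiset.count_zero, Multiset.count_singleton] at hx
    simp only [tm, hC', Multiset.count_add, Multiset.count_sub, Multiset.insert_eq_cons,
      Multiset.count_cons, Multiset.count_singleton, Multiset.count_zero, Multiset.count_singleton, Pi.add_apply, Pi.sub_apply,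
      Pi.single_apply]

private lemma fwd_reach (n : ℕ) :
    ∀ C : Multiset Q, P.Reach C (P.Cf n) → C.card = n + 1 →
      P.NPReach (tm C) (tm (P.Cf n)) := by
  intro C h
  induction h using Relation.ReflTransGen.head_induction_on with
  | refl => intro _; exact Relation.ReflTransGen.refl
  | @head C c hs hr ih =>
    intro hcard
    have c1 : C.card ≤ c.card := step_card P hs
    have c2 : c.card ≤ (P.Cf n).card := reach_card P hr
    have c3 : (P.Cf n).card = n + 1 := by simp [RVProtocol.Cf]
    have hcc : c.card = n + 1 := by omega
    have hcard' : c.card = C.card := by omega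
    exact Relation.ReflTransGen.head (fwd_step P hs hcard') (ih hcc)

private lemma init_reach : ∀ k : ℕ, P.NPReach P.M0 (P.M0 + Pi.single P.qi k)
  | 0 => by
      rw [Pi.single_zero, add_zero]
      exact Relation.ReflTransGen.refl
  | (k + 1) => by
    refine Relation.ReflTransGen.tail (init_reach k) (Or.inl ?_)
    funext x
    simp only [Pi.add_apply, Pi.single_apply]
    split_ifs <;> omega

end Aux

/-- For every `n`, the final configuration `C_f^{(n)}` is reachable from
the initial configuration `C_i^{(n)}` in the rendez-vous protocol `P` iff the marking
`M_f^{(n)}` is reachable from `M_0` in the associated Petri net `N_P`. -/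
theorem rv_reach_iff_petri_reach {Q A : Type} [Fintype Q] [Fintype A] [DecidableEq Q]
    (P : RVProtocol Q A) (n : ℕ) :
    P.Reach (P.Ci n) (P.Cf n) ↔ P.NPReach P.M0 (P.Mf n) := by
  constructor
  · intro h
    have hcard : (P.Ci n).card = n + 1 := by simp [RVProtocol.Ci]
    have hmid := fwd_reach P n _ h hcard
    have hci : tm (P.Ci n) = P.M0 + Pi.single P.qi n := by
      funext x
      simp only [tm, RVProtocol.Ci, RVProtocol.M0, Multiset.count_add,
        count_replicate', Multiset.count_singleton, Pi.add_apply,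
        Pi.single_apply]
      split_ifs <;> omega
    have h0 := init_reach P n
    rw [← hci] at h0
    have hlast : P.NPStep (tm (P.Cf n)) (P.Mf n) := by
      refine Or.inr (Or.inl ⟨?_, ?_⟩)
      · rw [Pi.le_def]; intro x
        simp only [tm, RVProtocol.Cf, Multiset.count_add, count_replicate',
          Multiset.count_singleton, Pi.single_apply]
        split_ifs <;> omega
      · funext x
        simp only [tm, RVProtocol.Cf, RVProtocol.Mf, Multiset.count_add,
          count_replicate', Multiset.count_singleton, Pi.sub_apply,
          Pi.single_apply]
        split_ifs <;> omega
    exact Relation.ReflTransGen.tail (Relation.ReflTransGen.trans h0 hmid) hlast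
  · intro h
    have hlc0 : lc P P.M0 = 1 := by
      rw [RVProtocol.M0, lc_single, P.hqiL]; simp
    have key := reach1 P n P.M0 h hlc0
    have heq : fm P.M0 + Multiset.replicate (n + 1 - tot P.M0) P.qi = P.Ci n := by
      have ht : tot (P.M0 : Q → ℕ) = 1 := tot_single _ _
      rw [ht]
      refine Multiset.ext.2 fun x => ?_
      simp only [RVProtocol.Ci, RVProtocol.M0, Multiset.count_add, count_fm,
        count_replicate', Multiset.count_singleton, Pi.single_apply]
      split_ifs <;> omega
    rwa [heq] at key
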